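/- Let g be a finite-dimensional simple real Lie algebra equipped with an invariant inner product, i.e. a positive-definite symmetric bilinear form B with B([x,y],z) + B(y,[x,z]) = 0 for all x,y,z ∈ g (so g is compact simple). Then for every nonzero h ∈ g, the Lie subalgebra of g generated by the subspace [g,h] = {[x,h] : x ∈ g} is all of g. -/

import Mathlib

/-- For a finite-dimensional simple real Lie algebra `g` with an
invariant inner product (i.e. a compact simple Lie algebra) and any nonzero `h ∈ g`,
the Lie subalgebra generated by the subspace `[g,h] = {⁅x,h⁆ | x ∈ g}` is all of `g`. -/
theorem lieSpan_bracket_range_eq_top_of_simple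
    {L : Type*} [LieRing L] [LieAlgebra ℝ L] [FiniteDimensional ℝ L]
    [LieAlgebra.IsSimple ℝ L]
    (B : L →ₗ[ℝ] L →ₗ[ℝ] ℝ)
    (hsymm : ∀ x y : L, B x y = B y x)
    (hposdef : ∀ v : L, v ≠ 0 → 0 < B v v)
    (hinv : ∀ x y z : L, B ⁅x, y⁆ z + B y ⁅x, z⁆ = 0) :
    ∀ h : L, h ≠ 0 →
      LieSubalgebra.lieSpan ℝ L {v : L | ∃ w : L, v = ⁅w, h⁆} = ⊤ := by
  intro h hh
  set gen : Set L := {v : L | ∃ w : L, v = ⁅w, h⁆} with hgen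
  set S : LieSubalgebra ℝ L := LieSubalgebra.lieSpan ℝ L gen with hS
  -- The linear map `w ↦ ⁅w, h⁆` and its range `V`.
  set f : L →ₗ[ℝ] L :=
    { toFun := fun w => ⁅w, h⁆
      map_add' := fun a b => add_lie a b h
      map_smul' := fun r a => smul_lie r a h } with hf
  set V : Submodule ℝ L := LinearMap.range f with hV
  have hmemV : ∀ v, v ∈ V ↔ ∃ w : L, v = ⁅w, h⁆ := by
    intro v
    constructor
    · rintro ⟨w, rfl⟩; exact ⟨w, rfl⟩
    · rintro ⟨w, rfl⟩; exact ⟨w, rfl⟩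
  have hgenS : ∀ w : L, ⁅w, h⁆ ∈ S := fun w =>
    LieSubalgebra.subset_lieSpan ⟨w, rfl⟩
  have hVS : ∀ v ∈ V, v ∈ S := by
    intro v hv
    obtain ⟨w, rfl⟩ := (hmemV v).1 hv
    exact hgenS w
  -- `B` is reflexive and nondegenerate on `V`.
  have hrefl : B.IsRefl := fun x y hxy => by rw [hsymm]; exact hxy
  have hzero : ∀ v : L, B v v = 0 → v = 0 := by
    intro v hv
    by_contra hne
    exact (hposdef v hne).ne' hv
  have hnd : (LinearMap.BilinForm.restrict B V).Nondegenerate := by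
    refine ⟨fun x hx => ?_, fun x hx => ?_⟩
    · have := hx x
      simp only [LinearMap.BilinForm.restrict_apply] at this
      exact Subtype.ext (hzero _ this)
    · have := hx x
      simp only [LinearMap.BilinForm.restrict_apply] at this
      exact Subtype.ext (hzero _ this)
  have hcompl : IsCompl V (LinearMap.BilinForm.orthogonal B V) :=
    LinearMap.BilinForm.isCompl_orthogonal_of_restrict_nondegenerate hrefl hnd
  -- Elements of the orthogonal complement of `V` centralize `h`.
  have horth : ∀ z ∈ LinearMap.BilinForm.orthogonal B V, ⁅z, h⁆ = 0 := by
    intro z hz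
    have h1 : ∀ x : L, B ⁅x, h⁆ z = 0 := by
      intro x
      exact hz ⁅x, h⁆ ((hmemV _).2 ⟨x, rfl⟩)
    have h2 : ∀ x : L, B h ⁅x, z⁆ = 0 := by
      intro x
      have := hinv x h z
      rw [h1 x] at this
      linarith
    apply hzero
    have h3 := hinv z h ⁅z, h⁆
    have h4 : B h ⁅z, ⁅z, h⁆⁆ = 0 := by
      have : ⁅z, ⁅z, h⁆⁆ = ⁅-⁅z, h⁆, z⁆ := by
        rw [neg_lie, ← lie_skew]
      rw [this]
      exact h2 _
    rw [h4] at h3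
    linarith
  -- Decompose an arbitrary element as `p + c` with `p ∈ V` and `⁅c, h⁆ = 0`.
  have hdecomp : ∀ x : L, ∃ p ∈ V, ∃ c : L, ⁅c, h⁆ = 0 ∧ x = p + c := by
    intro x
    have : x ∈ V ⊔ LinearMap.BilinForm.orthogonal B V := by
      rw [hcompl.sup_eq_top]; trivial
    obtain ⟨p, hp, c, hc, hx⟩ := Submodule.mem_sup.1 this
    exact ⟨p, hp, c, horth c hc, hx.symm⟩
  -- `S` is stable under bracketing with arbitrary elements.
  have hideal : ∀ (x m : L), m ∈ S → ⁅x, m⁆ ∈ S := by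
    intro x m hm
    -- the subalgebra of elements `s ∈ S` with `⁅L, s⁆ ⊆ S`
    set T : Submodule ℝ L :=
      { carrier := {s : L | s ∈ S ∧ ∀ x : L, ⁅x, s⁆ ∈ S}
        add_mem' := by
          rintro a b ⟨haS, ha⟩ ⟨hbS, hb⟩
          refine ⟨S.add_mem haS hbS, fun x => ?_⟩
          rw [lie_add]
          exact S.add_mem (ha x) (hb x)
        zero_mem' := by
          refine ⟨S.zero_mem, fun x => ?_⟩
          rw [lie_zero]; exact S.zero_mem
        smul_mem' := by
          rintro r a ⟨haS, ha⟩
          refine ⟨S.smul_mem r haS, fun x => ?_⟩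
          rw [lie_smul]
          exact S.smul_mem r (ha x) } with hT
    set N : LieSubalgebra ℝ L :=
      { T with
        lie_mem' := by
          rintro a b ⟨haS, ha⟩ ⟨hbS, hb⟩
          refine ⟨S.lie_mem haS hbS, fun x => ?_⟩
          rw [leibniz_lie]
          exact S.add_mem (S.lie_mem (ha x) hbS) (S.lie_mem haS (hb x)) } with hN
    have hgenN : gen ⊆ N := by
      rintro v ⟨w, rfl⟩
      refine ⟨hgenS w, fun x => ?_⟩
      obtain ⟨p, hp, c, hc, rfl⟩ := hdecomp x
      rw [add_lie]
      refine S.add_mem (S.lie_mem (hVS p hp) (hgenS w)) ?_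
      have : ⁅c, ⁅w, h⁆⁆ = ⁅⁅c, w⁆, h⁆ + ⁅w, ⁅c, h⁆⁆ := leibniz_lie c w h
      rw [this, hc, lie_zero, add_zero]
      exact hgenS ⁅c, w⁆
    have hSN : S ≤ N := LieSubalgebra.lieSpan_le.2 hgenN
    exact (hSN hm).2 x
  -- Package `S` as a Lie ideal.
  set I : LieIdeal ℝ L :=
    { S.toSubmodule with
      lie_mem := fun {x m} hm => hideal x m hm } with hI
  have hIne : I ≠ ⊥ := by
    intro hbot
    -- otherwise `h` would be central
    have hcen : ∀ x : L, ⁅x, h⁆ = 0 := by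
      intro x
      by_contra hne
      have : ⁅x, h⁆ ∈ I := hgenS x
      rw [hbot] at this
      exact hne (by simpa using this)
    have : h ∈ LieAlgebra.center ℝ L := (LieModule.mem_maxTrivSubmodule ℝ L L h).2 hcen
    rw [LieAlgebra.center_eq_bot] at this
    exact hh (by simpa using this)
  have hItop : I = ⊤ := (LieAlgebra.IsSimple.eq_bot_or_eq_top I).resolve_left hIne
  -- conclude
  have : (S : Submodule ℝ L) = ⊤ := by
    have := congrArg (fun J : LieIdeal ℝ L => (J : Submodule ℝ L)) hItop
    exact this.trans (LieSubmodule.top_toSubmodule (R := ℝ) (L := L) (M := L))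
  rw [hS] at this ⊢
  exact LieSubalgebra.toSubmodule_injective (by simpa using this)
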